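/- Let p ≥ 1 and let f ∈ L^p(ℝ) be nonzero with ‖f‖_p = 1. For an interval I of positive finite length and integers k ≥ 0 define f_I^k := f · χ_I · χ_{|f| ≤ 2^k |I|^{-1/p}}. Suppose (I_k) is a sequence of intervals chosen so that for each K, setting f^{>0} := f and inductively f^k := f^{>k-1} χ_{|f| < 2^k |I_k|^{-1/p}} χ_{I_k}, f^{>k} := f^{>k-1} - f^k, the interval I_k maximizes ‖f^k‖_p over all dyadic intervals. Then for every K ≥ 1, the quantity A_K := sup over dyadic intervals I of ‖(f^{>2K})_I^K‖_p satisfies K · A_K^p ≤ 1. -/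

import Mathlib

open MeasureTheory ENNReal Classical

-- The dyadic interval of length `2^k` starting at `m * 2^k` (indexed by `(k, m) : ℤ × ℤ`).
def dyadicI (k m : ℤ) : Set ℝ :=
  Set.Ico ((m : ℝ) * 2 ^ (k : ℝ)) (((m : ℝ) + 1) * 2 ^ (k : ℝ))

-- `pieceLT p f prev j (k, m)` is `prev · χ_I · χ_{|f| < 2^j |I|^{-1/p}}` where `I = dyadicI k m`
-- (so `|I|^{-1/p} = 2^{-k/p}`); this is the piece removed at step `j` of the recursion.
noncomputable def pieceLT (p : ℝ) (f prev : ℝ → ℂ) (j : ℕ) (km : ℤ × ℤ) : ℝ → ℂ := fun t =>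
  if t ∈ dyadicI km.1 km.2 ∧ ‖f t‖ < (2 : ℝ) ^ (j : ℝ) * (2 : ℝ) ^ (-(km.1 : ℝ) / p)
  then prev t else 0

-- `fgt p f I j` is the remainder `f^{> j}`: `f^{>0} = f` and
-- `f^{>j} = f^{>j-1} - f^{>j-1} χ_{I_j} χ_{|f| < 2^j |I_j|^{-1/p}}`.
noncomputable def fgt (p : ℝ) (f : ℝ → ℂ) (I : ℕ → ℤ × ℤ) : ℕ → ℝ → ℂ
  | 0 => f
  | j + 1 => fun t => fgt p f I j t - pieceLT p f (fgt p f I j) (j + 1) (I (j + 1)) t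

-- `truncLE p f g K (k, m)` is `g_I^K = g · χ_I · χ_{|f| ≤ 2^K |I|^{-1/p}}` with `I = dyadicI k m`.
noncomputable def truncLE (p : ℝ) (f g : ℝ → ℂ) (K : ℕ) (km : ℤ × ℤ) : ℝ → ℂ := fun t =>
  if t ∈ dyadicI km.1 km.2 ∧ ‖f t‖ ≤ (2 : ℝ) ^ (K : ℝ) * (2 : ℝ) ^ (-(km.1 : ℝ) / p)
  then g t else 0

-- each step either keeps the previous value or zeroes it out
lemma fgt_succ_or (p : ℝ) (f : ℝ → ℂ) (I : ℕ → ℤ × ℤ) (n : ℕ) (t : ℝ) :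
    fgt p f I (n + 1) t = fgt p f I n t ∨ fgt p f I (n + 1) t = 0 := by
  simp only [fgt, pieceLT]
  split <;> simp

lemma fgt_norm_mono (p : ℝ) (f : ℝ → ℂ) (I : ℕ → ℤ × ℤ) {n m : ℕ} (h : n ≤ m) (t : ℝ) :
    ‖fgt p f I m t‖ ≤ ‖fgt p f I n t‖ := by
  induction m, h using Nat.le_induction with
  | base => exact le_refl _
  | succ m hm ih =>
    rcases fgt_succ_or p f I m t with h1 | h1 <;> rw [h1]
    · exact ih
    · simpa using norm_nonneg _ |>.trans ih

-- disjoint-supports telescoping identity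
lemma piece_sum_eq (p : ℝ) (hp0 : 0 < p) (f : ℝ → ℂ) (I : ℕ → ℤ × ℤ) (n : ℕ) (t : ℝ) :
    ∑ i ∈ Finset.range n,
        (‖pieceLT p f (fgt p f I i) (i + 1) (I (i + 1)) t‖₊ : ℝ≥0∞) ^ p
      + (‖fgt p f I n t‖₊ : ℝ≥0∞) ^ p = (‖f t‖₊ : ℝ≥0∞) ^ p := by
  induction n with
  | zero => simp [fgt]
  | succ n ih =>
    rw [Finset.sum_range_succ, ← ih]
    have hdef : fgt p f I (n + 1) t
        = fgt p f I n t - pieceLT p f (fgt p f I n) (n + 1) (I (n + 1)) t := rfl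
    by_cases hc : t ∈ dyadicI (I (n + 1)).1 (I (n + 1)).2 ∧
        ‖f t‖ < (2 : ℝ) ^ ((n + 1 : ℕ) : ℝ) * (2 : ℝ) ^ (-(((I (n + 1)).1 : ℤ) : ℝ) / p)
    · simp only [hdef, pieceLT, if_pos hc, sub_self, nnnorm_zero, ENNReal.coe_zero,
        ENNReal.zero_rpow_of_pos hp0, add_zero]
    · simp only [hdef, pieceLT, if_neg hc, sub_zero, nnnorm_zero, ENNReal.coe_zero,
        ENNReal.zero_rpow_of_pos hp0, add_zero]

lemma sum_lintegral_le {ι : Type*} (s : Finset ι) (g : ι → ℝ → ℝ≥0∞) :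
    ∑ i ∈ s, ∫⁻ t, g i t ≤ ∫⁻ t, ∑ i ∈ s, g i t := by
  classical
  induction s using Finset.cons_induction with
  | empty => simp
  | cons a s hx ih =>
    rw [Finset.sum_cons]
    refine le_trans (add_le_add_right ih _) ?_
    refine le_trans (MeasureTheory.le_lintegral_add _ _) (le_of_eq ?_)
    congr 1; ext t; rw [Finset.sum_cons]

theorem stmt_3 (p : ℝ) (hp : 1 ≤ p) (f : ℝ → ℂ)
    (hf : MemLp f (ENNReal.ofReal p) volume)
    (hf0 : ¬ f =ᵐ[volume] 0)
    (hf1 : eLpNorm f (ENNReal.ofReal p) volume = 1)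
    (I : ℕ → ℤ × ℤ)
    -- at each step `j ≥ 1`, the dyadic interval `I j` maximizes the `L^p` norm of the
    -- removed piece over all dyadic intervals
    (hmax : ∀ j : ℕ, 1 ≤ j → ∀ km : ℤ × ℤ,
      eLpNorm (pieceLT p f (fgt p f I (j - 1)) j km) (ENNReal.ofReal p) volume ≤
        eLpNorm (pieceLT p f (fgt p f I (j - 1)) j (I j)) (ENNReal.ofReal p) volume) :
    ∀ K : ℕ, 1 ≤ K →
      (K : ℝ≥0∞) *
        (⨆ km : ℤ × ℤ,
          eLpNorm (truncLE p f (fgt p f I (2 * K)) K km) (ENNReal.ofReal p) volume) ^ p ≤ 1 := by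
  intro K hK
  have hp0 : 0 < p := lt_of_lt_of_le one_pos hp
  set q : ℝ≥0∞ := ENNReal.ofReal p with hq
  have hq0 : q ≠ 0 := by simp [hq, ENNReal.ofReal_pos.2 hp0, ne_of_gt]
  have hqt : q ≠ ∞ := ENNReal.ofReal_ne_top
  have hqr : q.toReal = p := ENNReal.toReal_ofReal hp0.le
  -- the p-th power functional
  set N : (ℝ → ℂ) → ℝ≥0∞ := fun g => ∫⁻ t, (‖g t‖₊ : ℝ≥0∞) ^ p with hN
  have hNorm : ∀ g : ℝ → ℂ, eLpNorm g q volume = (N g) ^ (1 / p) := by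
    intro g
    rw [eLpNorm_eq_lintegral_rpow_enorm_toReal hq0 hqt, hqr]
    rfl
  have hpow : ∀ g : ℝ → ℂ, (eLpNorm g q volume) ^ p = N g := by
    intro g
    rw [hNorm g, ← ENNReal.rpow_mul, one_div, inv_mul_cancel₀ hp0.ne', ENNReal.rpow_one]
  -- the pieces at steps K+1, ..., 2K
  set B : ℕ → ℝ≥0∞ := fun j =>
    eLpNorm (pieceLT p f (fgt p f I (K + j)) (K + j + 1) (I (K + j + 1))) q volume with hB
  set A : ℝ≥0∞ :=
    ⨆ km : ℤ × ℤ, eLpNorm (truncLE p f (fgt p f I (2 * K)) K km) q volume with hA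
  -- A ≤ B j for every j < K
  have hAB : ∀ j : ℕ, j < K → A ≤ B j := by
    intro j hj
    refine iSup_le fun km => ?_
    have step1 : eLpNorm (truncLE p f (fgt p f I (2 * K)) K km) q volume ≤
        eLpNorm (pieceLT p f (fgt p f I (K + j)) (K + j + 1) km) q volume := by
      refine eLpNorm_mono fun t => ?_
      simp only [truncLE, pieceLT]
      split
      · rename_i hcond
        have hlt : ‖f t‖ < (2 : ℝ) ^ ((K + j + 1 : ℕ) : ℝ) * (2 : ℝ) ^ (-(km.1 : ℝ) / p) := by
          refine lt_of_le_of_lt hcond.2 ?_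
          have h2 : (2 : ℝ) ^ ((K : ℕ) : ℝ) < (2 : ℝ) ^ ((K + j + 1 : ℕ) : ℝ) := by
            apply Real.rpow_lt_rpow_left_iff (x := 2) one_lt_two |>.2
            exact_mod_cast Nat.lt_succ_of_le (Nat.le_add_right K j)
          exact mul_lt_mul_of_pos_right h2 (Real.rpow_pos_of_pos two_pos _)
        rw [if_pos ⟨hcond.1, hlt⟩]
        exact fgt_norm_mono p f I (by omega) t
      · split <;> simp [norm_nonneg]
    refine step1.trans ?_
    have := hmax (K + j + 1) (by omega) km
    simpa [Nat.add_sub_cancel] using this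
  -- K * A^p ≤ ∑_{j < K} (B j)^p
  have hKA : (K : ℝ≥0∞) * A ^ p ≤ ∑ j ∈ Finset.range K, (B j) ^ p := by
    calc (K : ℝ≥0∞) * A ^ p = ∑ _j ∈ Finset.range K, A ^ p := by
          simp [Finset.sum_const, mul_comm]
      _ ≤ ∑ j ∈ Finset.range K, (B j) ^ p := by
          refine Finset.sum_le_sum fun j hj => ?_
          exact ENNReal.rpow_le_rpow (hAB j (Finset.mem_range.1 hj)) hp0.le
  -- ∑_{j < K} (B j)^p ≤ 1
  have hsum : ∑ j ∈ Finset.range K, (B j) ^ p ≤ 1 := by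
    have hBp : ∀ j, (B j) ^ p
        = N (pieceLT p f (fgt p f I (K + j)) (K + j + 1) (I (K + j + 1))) := fun j => hpow _
    simp only [hBp]
    set P : ℕ → ℝ → ℂ := fun i => pieceLT p f (fgt p f I i) (i + 1) (I (i + 1)) with hP
    have hre : ∑ j ∈ Finset.range K, N (P (K + j)) = ∑ i ∈ Finset.Ico K (2 * K), N (P i) := by
      rw [Finset.sum_Ico_eq_sum_range, show 2 * K - K = K from by omega]
    calc ∑ j ∈ Finset.range K, N (P (K + j))
        = ∑ i ∈ Finset.Ico K (2 * K), N (P i) := hre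
      _ ≤ ∑ i ∈ Finset.range (2 * K), N (P i) := by
          refine Finset.sum_le_sum_of_subset ?_
          intro i hi
          simp only [Finset.mem_Ico] at hi
          exact Finset.mem_range.2 hi.2
      _ ≤ ∫⁻ t, ∑ i ∈ Finset.range (2 * K), (‖P i t‖₊ : ℝ≥0∞) ^ p :=
          sum_lintegral_le _ _
      _ ≤ ∫⁻ t, (‖f t‖₊ : ℝ≥0∞) ^ p := by
          refine lintegral_mono fun t => ?_
          rw [← piece_sum_eq p hp0 f I (2 * K) t]
          exact le_self_add
      _ = (eLpNorm f q volume) ^ p := (hpow f).symm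
      _ = 1 := by rw [hf1, ENNReal.one_rpow]
  exact hKA.trans hsum
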